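/- For b ≥ 1, j ≥ 0, k ≥ j and n ≥ k, the identity Σ 1/(r_1!⋯r_j! · s_1!⋯s_b! · 2^{s_1+⋯+s_b}) = (j!/k!) · S_{b/2}(k+b/2, j+b/2) holds, where the sum is over all r_1,…,r_j ∈ ℕ_{≥1} and s_1,…,s_b ∈ ℕ_{≥0} with r_1+⋯+r_j+s_1+⋯+s_b = k, and S_{b/2}(k+b/2,j+b/2) := Σ_{m=j}^{k} binom(k,m) S(m,j) (b/2)^{k−m} with S the ordinary Stirling number of the second kind. -/

import Mathlib

/-- The Stirling numbers of the second kind. -/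
def stirling2 : ℕ → ℕ → ℕ
  | 0, 0 => 1
  | 0, _ + 1 => 0
  | _ + 1, 0 => 0
  | n + 1, k + 1 => (k + 1) * stirling2 n (k + 1) + stirling2 n k

open Finset Finset.Nat

lemma sum_adT_succ (c k : ℕ) (F : ℕ → ℕ → ℚ) :
    ∑ h ∈ antidiagonalTuple (c + 1) k, ∏ i : Fin (c + 1), F i (h i)
      = ∑ p ∈ Finset.HasAntidiagonal.antidiagonal k, F 0 p.1 *
          ∑ h ∈ antidiagonalTuple c p.2, ∏ i : Fin c, F (i + 1) (h i) := by
  simp_rw [Finset.mul_sum]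
  rw [Finset.sum_sigma']
  refine Finset.sum_bij' (fun h _ => ⟨(h 0, ∑ i : Fin c, h i.succ), Fin.tail h⟩)
    (fun x _ => Fin.cons x.1.1 x.2) ?_ ?_ ?_ ?_ ?_
  · intro h hh
    rw [Finset.Nat.mem_antidiagonalTuple] at hh
    refine Finset.mem_sigma.2 ⟨Finset.HasAntidiagonal.mem_antidiagonal.2 ?_, Finset.Nat.mem_antidiagonalTuple.2 rfl⟩
    simp only
    rw [← hh, Fin.sum_univ_succ]
  · intro x hx
    rw [Finset.mem_sigma, Finset.HasAntidiagonal.mem_antidiagonal, Finset.Nat.mem_antidiagonalTuple] at hx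
    rw [Finset.Nat.mem_antidiagonalTuple, Fin.sum_cons, hx.2, hx.1]
  · intro h _
    exact Fin.cons_self_tail h
  · intro x hx
    rw [Finset.mem_sigma, Finset.HasAntidiagonal.mem_antidiagonal, Finset.Nat.mem_antidiagonalTuple] at hx
    ext
    · simp
    · simp [hx.2]
    · simp [Fin.tail_cons]
  · intro h _
    rw [Fin.prod_univ_succ]
    simp [Fin.tail]

lemma stirling2_zero_right : ∀ m, stirling2 m 0 = if m = 0 then 1 else 0
  | 0 => rfl
  | _ + 1 => rfl

lemma stirling2_one : ∀ m, stirling2 (m + 1) 1 = 1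
  | 0 => rfl
  | m + 1 => by
    show 1 * stirling2 (m + 1) 1 + stirling2 (m + 1) 0 = 1
    rw [stirling2_one m, stirling2_zero_right]
    simp

lemma stirling2_eq_zero_of_lt : ∀ m j, m < j → stirling2 m j = 0
  | 0, _ + 1, _ => rfl
  | m + 1, j + 1, h => by
    show (j + 1) * stirling2 m (j + 1) + stirling2 m j = 0
    rw [stirling2_eq_zero_of_lt m (j+1) (by omega), stirling2_eq_zero_of_lt m j (by omega)]
    simp

lemma keyK : ∀ m j, ∑ a ∈ range (m + 1), m.choose a * stirling2 a j = stirling2 (m + 1) (j + 1)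
  | 0, j => by
    simp [stirling2]
  | m + 1, j => by
    rw [Finset.sum_range_succ']
    have h1 : ∀ a, (m+1).choose (a+1) = m.choose a + m.choose (a+1) := fun a => rfl
    simp only [h1, add_mul, Finset.sum_add_distrib]
    have h2 : ∑ a ∈ range (m + 1), m.choose (a+1) * stirling2 (a+1) j
        + (m+1).choose 0 * stirling2 0 j
        = ∑ a ∈ range (m + 2), m.choose a * stirling2 a j := by
      rw [Finset.sum_range_succ' (fun a => m.choose a * stirling2 a j) (m+1)]
      simp
    have h3 : ∑ a ∈ range (m + 2), m.choose a * stirling2 a j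
        = ∑ a ∈ range (m + 1), m.choose a * stirling2 a j := by
      rw [Finset.sum_range_succ, Nat.choose_succ_self, zero_mul, add_zero]
    rw [add_assoc, h2, h3, keyK m j]
    -- remaining: ∑ a ∈ range (m+1), m.choose a * stirling2 (a+1) j + S(m+1,j+1) = S(m+2,j+1)
    cases j with
    | zero =>
      simp only [stirling2_zero_right]
      show (∑ a ∈ range (m + 1), m.choose a * (if a + 1 = 0 then 1 else 0)) + stirling2 (m+1) 1
        = stirling2 (m+2) 1
      simp [stirling2_one]
    | succ j =>
      have h4 : ∀ a, stirling2 (a + 1) (j + 1) = (j+1) * stirling2 a (j+1) + stirling2 a j := fun a => rfl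
      simp only [h4, Nat.mul_add, Finset.sum_add_distrib]
      have h5 : ∑ x ∈ range (m+1), m.choose x * ((j+1) * stirling2 x (j+1))
          = (j+1) * ∑ x ∈ range (m+1), m.choose x * stirling2 x (j+1) := by
        rw [Finset.mul_sum]; exact Finset.sum_congr rfl fun x _ => by ring
      rw [h5, keyK m (j+1), keyK m j]
      show (j + 1) * stirling2 (m+1) (j+2) + stirling2 (m+1) (j+1) + stirling2 (m+1) (j+2)
        = (j + 2) * stirling2 (m + 1) (j + 2) + stirling2 (m+1) (j+1)
      ring

noncomputable def f0 (t : ℕ) : ℚ := if t = 0 then 0 else (t.factorial : ℚ)⁻¹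

lemma keyK' (m j : ℕ) :
    ∑ t ∈ range m, m.choose t * stirling2 t j = (j + 1) * stirling2 m (j + 1) := by
  have h := keyK m j
  rw [Finset.sum_range_succ, Nat.choose_self, one_mul] at h
  have h4 : stirling2 (m + 1) (j + 1) = (j + 1) * stirling2 m (j + 1) + stirling2 m j := by
    cases m <;> cases j <;> rfl
  omega

lemma lemA (j m : ℕ) : (∑ h ∈ antidiagonalTuple j m, ∏ i : Fin j, f0 (h i))
    = (j.factorial : ℚ) * (stirling2 m j : ℚ) / (m.factorial : ℚ) := by
  induction j generalizing m with
  | zero =>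
    cases m with
    | zero => simp [antidiagonalTuple_zero_zero]; rfl
    | succ m => simp [antidiagonalTuple_zero_succ, stirling2_zero_right]
  | succ j ih =>
    refine (sum_adT_succ j m fun _ t => f0 t).trans ?_
    simp only [ih]
    rw [Finset.Nat.sum_antidiagonal_eq_sum_range_succ_mk, Finset.sum_range_succ']
    have hf00 : f0 0 = 0 := rfl
    rw [hf00, zero_mul, add_zero]
    have key : ∑ i ∈ range m, (m.choose i : ℚ) * (stirling2 i j : ℚ)
        = ((j:ℚ) + 1) * (stirling2 m (j+1) : ℚ) := by
      have h := congrArg (Nat.cast : ℕ → ℚ) (keyK' m j)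
      push_cast at h
      exact h
    calc ∑ i ∈ range m, f0 (i + 1) *
            ((j.factorial : ℚ) * (stirling2 (m - (i+1)) j : ℚ) / ((m - (i+1)).factorial : ℚ))
        = ∑ i ∈ range m, (fun t => (j.factorial : ℚ) / (m.factorial : ℚ)
            * (m.choose t : ℚ) * (stirling2 t j : ℚ)) (m - 1 - i) := by
          refine Finset.sum_congr rfl fun i hi => ?_
          rw [Finset.mem_range] at hi
          simp only
          have h1 : m - 1 - i = m - (i + 1) := by omega
          have h2 : m - (i + 1) ≤ m := by omega
          have h3 : m - (m - (i + 1)) = i + 1 := by omega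
          have hf : f0 (i + 1) = ((i+1).factorial : ℚ)⁻¹ := by simp [f0]
          rw [h1, hf, Nat.cast_choose ℚ h2, h3]
          have n1 : ((i+1).factorial : ℚ) ≠ 0 := Nat.cast_ne_zero.2 (Nat.factorial_ne_zero _)
          have n2 : ((m - (i+1)).factorial : ℚ) ≠ 0 := Nat.cast_ne_zero.2 (Nat.factorial_ne_zero _)
          have n3 : (m.factorial : ℚ) ≠ 0 := Nat.cast_ne_zero.2 (Nat.factorial_ne_zero _)
          field_simp
      _ = ∑ t ∈ range m, (j.factorial : ℚ) / (m.factorial : ℚ)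
            * (m.choose t : ℚ) * (stirling2 t j : ℚ) :=
          Finset.sum_range_reflect (fun t => (j.factorial : ℚ) / (m.factorial : ℚ)
            * (m.choose t : ℚ) * (stirling2 t j : ℚ)) m
      _ = ((j+1).factorial : ℚ) * (stirling2 m (j+1) : ℚ) / (m.factorial : ℚ) := by
          simp_rw [mul_assoc, ← Finset.mul_sum]
          rw [key, Nat.factorial_succ]
          push_cast
          ring

lemma lemB (b t : ℕ) :
    (∑ h ∈ antidiagonalTuple b t, ∏ i : Fin b, ((h i).factorial : ℚ)⁻¹ * ((2:ℚ) ^ (h i))⁻¹)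
      = ((b : ℚ) / 2) ^ t / (t.factorial : ℚ) := by
  induction b generalizing t with
  | zero =>
    cases t with
    | zero => simp [antidiagonalTuple_zero_zero]
    | succ t => simp [antidiagonalTuple_zero_succ, zero_pow]
  | succ b ih =>
    refine (sum_adT_succ b t fun _ s => ((s.factorial : ℚ))⁻¹ * ((2:ℚ) ^ s)⁻¹).trans ?_
    simp only [ih]
    rw [Finset.Nat.sum_antidiagonal_eq_sum_range_succ_mk]
    have : ((b + 1 : ℕ) : ℚ) / 2 = 1/2 + (b : ℚ)/2 := by push_cast; ring
    rw [this, add_pow, Finset.sum_div]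
    refine Finset.sum_congr rfl fun a ha => ?_
    rw [Finset.mem_range] at ha
    have h2 : a ≤ t := by omega
    rw [Nat.cast_choose ℚ h2]
    have n1 : ((a).factorial : ℚ) ≠ 0 := Nat.cast_ne_zero.2 (Nat.factorial_ne_zero _)
    have n2 : ((t - a).factorial : ℚ) ≠ 0 := Nat.cast_ne_zero.2 (Nat.factorial_ne_zero _)
    have n3 : (t.factorial : ℚ) ≠ 0 := Nat.cast_ne_zero.2 (Nat.factorial_ne_zero _)
    have n4 : ((2:ℚ) ^ a) ≠ 0 := pow_ne_zero _ two_ne_zero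
    field_simp
    ring_nf
    field_simp
    rw [mul_assoc, ← mul_pow]
    norm_num

lemma assoc3 (k : ℕ) (f A B : ℕ → ℚ) :
    ∑ p ∈ Finset.HasAntidiagonal.antidiagonal k, f p.1 * ∑ q ∈ Finset.HasAntidiagonal.antidiagonal p.2, A q.1 * B q.2
      = ∑ p ∈ Finset.HasAntidiagonal.antidiagonal k,
          (∑ q ∈ Finset.HasAntidiagonal.antidiagonal p.1, f q.1 * A q.2) * B p.2 := by
  have h1 : ∑ p ∈ Finset.HasAntidiagonal.antidiagonal k,
      f p.1 * ∑ q ∈ Finset.HasAntidiagonal.antidiagonal p.2, A q.1 * B q.2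
      = PowerSeries.coeff k (PowerSeries.mk f * (PowerSeries.mk A * PowerSeries.mk B)) := by
    rw [PowerSeries.coeff_mul]
    refine Finset.sum_congr rfl fun p _ => ?_
    rw [PowerSeries.coeff_mk, PowerSeries.coeff_mul]
    simp [PowerSeries.coeff_mk]
  have h2 : ∑ p ∈ Finset.HasAntidiagonal.antidiagonal k,
      (∑ q ∈ Finset.HasAntidiagonal.antidiagonal p.1, f q.1 * A q.2) * B p.2
      = PowerSeries.coeff k (PowerSeries.mk f * PowerSeries.mk A * PowerSeries.mk B) := by
    rw [PowerSeries.coeff_mul]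
    refine Finset.sum_congr rfl fun p _ => ?_
    rw [PowerSeries.coeff_mk, PowerSeries.coeff_mul]
    simp [PowerSeries.coeff_mk]
  rw [h1, h2, mul_assoc]

lemma lemSplit (f g : ℕ → ℚ) (c : ℕ) : ∀ j k : ℕ,
    (∑ h ∈ antidiagonalTuple (j + c) k,
        ∏ i : Fin (j + c), (if (i : ℕ) < j then f (h i) else g (h i)))
      = ∑ p ∈ Finset.HasAntidiagonal.antidiagonal k,
          (∑ h ∈ antidiagonalTuple j p.1, ∏ i : Fin j, f (h i)) *
          (∑ h ∈ antidiagonalTuple c p.2, ∏ i : Fin c, g (h i)) := by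
  intro j
  induction j with
  | zero =>
    intro k
    rw [show (0 : ℕ) + c = c from Nat.zero_add c]
    simp only [Nat.not_lt_zero, if_false]
    have e0 : ∀ a : ℕ, (∑ h ∈ antidiagonalTuple 0 a, ∏ i : Fin 0, f (h i))
        = if a = 0 then 1 else 0 := by
      intro a
      cases a with
      | zero => simp [antidiagonalTuple_zero_zero]
      | succ a => simp [antidiagonalTuple_zero_succ]
    simp only [e0]
    rw [Finset.sum_eq_single ((0 : ℕ), k)]
    · simp
    · intro p hp hne
      rw [Finset.HasAntidiagonal.mem_antidiagonal] at hp
      have : ¬ (p.1 = 0) := by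
        intro h0
        apply hne
        have : p.2 = k := by omega
        exact Prod.ext h0 this
      rw [if_neg this, zero_mul]
    · intro h
      exact absurd (Finset.HasAntidiagonal.mem_antidiagonal.2 (by simp)) h
  | succ j ih =>
    intro k
    rw [show j + 1 + c = j + c + 1 from by omega]
    refine (sum_adT_succ (j + c) k fun i t => if i < j + 1 then f t else g t).trans ?_
    have e1 : ∀ t : ℕ, (if 0 < j + 1 then f t else g t) = f t := fun t => if_pos (Nat.succ_pos j)
    have e2 : ∀ (i t : ℕ), (if i + 1 < j + 1 then f t else g t) = if i < j then f t else g t := by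
      intro i t
      simp [Nat.add_lt_add_iff_right]
    simp only [e1, e2, ih]
    rw [assoc3 k f (fun a => ∑ h ∈ antidiagonalTuple j a, ∏ i : Fin j, f (h i))
      (fun t => ∑ h ∈ antidiagonalTuple c t, ∏ i : Fin c, g (h i))]
    refine Finset.sum_congr rfl fun p _ => ?_
    congr 1
    exact (sum_adT_succ j p.1 fun _ t => f t).symm

/-- `Σ 1/(r_1!⋯r_j!·s_1!⋯s_b!·2^{s_1+⋯+s_b}) = (j!/k!)·S_{b/2}(k+b/2, j+b/2)`, the sum
being over `r_1,…,r_j ≥ 1`, `s_1,…,s_b ≥ 0` with `r_1+⋯+r_j+s_1+⋯+s_b = k`, where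
`S_{b/2}(k+b/2,j+b/2) = Σ_{m=j}^{k} binom(k,m) S(m,j) (b/2)^{k−m}`. -/
theorem sum_compositions_eq_halfIntStirling2 (n k j b : ℕ) (hb : 1 ≤ b) (hjk : j ≤ k)
    (hkn : k ≤ n) :
    (∑ h ∈ (Finset.Nat.antidiagonalTuple (j + b) k).filter
        (fun h => ∀ i : Fin (j + b), (i : ℕ) < j → 0 < h i),
      ∏ i : Fin (j + b),
        (if (i : ℕ) < j then ((h i).factorial : ℚ)⁻¹
          else ((h i).factorial : ℚ)⁻¹ * ((2 : ℚ) ^ h i)⁻¹)) =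
      (j.factorial : ℚ) / (k.factorial : ℚ) *
        ∑ m ∈ Finset.Icc j k, (k.choose m : ℚ) * (stirling2 m j : ℚ) * ((b : ℚ) / 2) ^ (k - m) := by
  have hfilt : (∑ h ∈ (antidiagonalTuple (j + b) k).filter
        (fun h => ∀ i : Fin (j + b), (i : ℕ) < j → 0 < h i),
      ∏ i : Fin (j + b),
        (if (i : ℕ) < j then ((h i).factorial : ℚ)⁻¹
          else ((h i).factorial : ℚ)⁻¹ * ((2 : ℚ) ^ h i)⁻¹))
      = ∑ h ∈ antidiagonalTuple (j + b) k,
          ∏ i : Fin (j + b), (if (i : ℕ) < j then f0 (h i)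
            else ((h i).factorial : ℚ)⁻¹ * ((2 : ℚ) ^ h i)⁻¹) := by
    rw [Finset.sum_filter]
    refine Finset.sum_congr rfl fun h _ => ?_
    by_cases hp : ∀ i : Fin (j + b), (i : ℕ) < j → 0 < h i
    · rw [if_pos hp]
      refine Finset.prod_congr rfl fun i _ => ?_
      by_cases hij : (i : ℕ) < j
      · rw [if_pos hij, if_pos hij, f0, if_neg (Nat.pos_iff_ne_zero.mp (hp i hij))]
      · rw [if_neg hij, if_neg hij]
    · rw [if_neg hp]
      push_neg at hp
      obtain ⟨i, hij, hi0⟩ := hp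
      refine (Finset.prod_eq_zero (Finset.mem_univ i) ?_).symm
      rw [if_pos hij, Nat.le_zero.mp hi0, f0]
      simp
  rw [hfilt, lemSplit f0 (fun t => ((t.factorial : ℚ))⁻¹ * ((2:ℚ) ^ t)⁻¹) b j k]
  simp only [lemA, lemB]
  rw [Finset.Nat.sum_antidiagonal_eq_sum_range_succ_mk]
  have hsub : Finset.Icc j k ⊆ Finset.range (k + 1) := by
    intro x hx
    rw [Finset.mem_Icc] at hx
    rw [Finset.mem_range]
    omega
  rw [show (∑ m ∈ Finset.Icc j k, (k.choose m : ℚ) * (stirling2 m j : ℚ) * ((b : ℚ) / 2) ^ (k - m))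
      = ∑ m ∈ Finset.range (k + 1), (k.choose m : ℚ) * (stirling2 m j : ℚ) * ((b : ℚ) / 2) ^ (k - m) from
    Finset.sum_subset hsub fun x hx hnx => by
      rw [Finset.mem_range] at hx
      rw [Finset.mem_Icc] at hnx
      have hxj : x < j := by omega
      rw [stirling2_eq_zero_of_lt x j hxj]
      simp]
  rw [Finset.mul_sum]
  refine Finset.sum_congr rfl fun m hm => ?_
  rw [Finset.mem_range] at hm
  have hmk : m ≤ k := by omega
  rw [Nat.cast_choose ℚ hmk]
  have n1 : (m.factorial : ℚ) ≠ 0 := Nat.cast_ne_zero.2 (Nat.factorial_ne_zero _)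
  have n2 : ((k - m).factorial : ℚ) ≠ 0 := Nat.cast_ne_zero.2 (Nat.factorial_ne_zero _)
  have n3 : (k.factorial : ℚ) ≠ 0 := Nat.cast_ne_zero.2 (Nat.factorial_ne_zero _)
  field_simp
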